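/- Let f_±(x,y,λ) = (1/2)[xy ± √(4λ² + (4−x²)(4−y²))]. For λ > 4 and −2 ≤ x, y ≤ 2, both partial derivatives of f_± with respect to x and y have absolute value at most 1. -/

import Mathlib

private lemma fpm_aux (lam : ℝ) (hlam : 4 < lam) (s : ℝ) (hs : s = 1 ∨ s = -1)
    (a b : ℝ) (ha : a ∈ Set.Icc (-2 : ℝ) 2) (hb : b ∈ Set.Icc (-2 : ℝ) 2) :
    |deriv (fun t : ℝ =>
        (t * b + s * Real.sqrt (4 * lam ^ 2 + (4 - t ^ 2) * (4 - b ^ 2))) / 2) a| ≤ 1 := by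
  obtain ⟨ha1, ha2⟩ := ha
  obtain ⟨hb1, hb2⟩ := hb
  have haa : |a| ≤ 2 := abs_le.mpr ⟨ha1, ha2⟩
  have hbb : |b| ≤ 2 := abs_le.mpr ⟨hb1, hb2⟩
  set R : ℝ := 4 * lam ^ 2 + (4 - a ^ 2) * (4 - b ^ 2) with hRdef
  have hfac : (0:ℝ) ≤ (4 - a ^ 2) * (4 - b ^ 2) := by
    apply mul_nonneg <;> nlinarith
  have hR : (0:ℝ) < R := by nlinarith
  have hr8 : (8:ℝ) < Real.sqrt R := by
    have h1 : Real.sqrt (4 * lam ^ 2) ≤ Real.sqrt R := by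
      apply Real.sqrt_le_sqrt; nlinarith
    have h2 : Real.sqrt (4 * lam ^ 2) = 2 * lam := by
      rw [show 4 * lam ^ 2 = (2 * lam) ^ 2 by ring]
      exact Real.sqrt_sq (by linarith)
    linarith
  set r := Real.sqrt R with hrdef
  have hrpos : 0 < r := by linarith
  -- derivative of inner function
  have hg : HasDerivAt (fun t : ℝ => 4 * lam ^ 2 + (4 - t ^ 2) * (4 - b ^ 2))
      (-(2 * a) * (4 - b ^ 2)) a := by
    have h := ((hasDerivAt_const a (4:ℝ)).sub (hasDerivAt_pow 2 a)).mul_const (4 - b ^ 2)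
    have h' := (hasDerivAt_const a (4 * lam ^ 2)).add h
    refine h'.congr_deriv ?_
    push_cast
    ring
  have hsq : HasDerivAt (fun t : ℝ => Real.sqrt (4 * lam ^ 2 + (4 - t ^ 2) * (4 - b ^ 2)))
      ((-(2 * a) * (4 - b ^ 2)) / (2 * r)) a := hg.sqrt (ne_of_gt hR)
  have hfull : HasDerivAt (fun t : ℝ =>
      (t * b + s * Real.sqrt (4 * lam ^ 2 + (4 - t ^ 2) * (4 - b ^ 2))) / 2)
      ((b + s * ((-(2 * a) * (4 - b ^ 2)) / (2 * r))) / 2) a := by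
    have h := (((hasDerivAt_id a).mul_const b).add (hsq.const_mul s)).div_const 2
    refine h.congr_deriv ?_
    ring
  rw [hfull.deriv]
  have hsabs : |s| = 1 := by rcases hs with h | h <;> simp [h]
  -- bound
  have key : |b + s * ((-(2 * a) * (4 - b ^ 2)) / (2 * r))| ≤ 2 := by
    have htri := abs_add_le b (s * ((-(2 * a) * (4 - b ^ 2)) / (2 * r)))
    have habs2 : |s * ((-(2 * a) * (4 - b ^ 2)) / (2 * r))| = |a| * (4 - b ^ 2) / r := by
      rw [abs_mul, hsabs, one_mul, abs_div, abs_mul, abs_mul]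
      rw [abs_of_pos hrpos, abs_of_nonneg (by nlinarith : (0:ℝ) ≤ 4 - b ^ 2)]
      rw [abs_neg, abs_of_pos (by norm_num : (0:ℝ) < 2), abs_mul,
        abs_of_pos (by norm_num : (0:ℝ) < 2)]
      ring
    have h1 : |a| * (4 - b ^ 2) ≤ 8 * (2 - |b|) := by
      nlinarith [sq_abs b, mul_nonneg (by linarith : (0:ℝ) ≤ 2 - |a|)
        (by nlinarith [sq_abs b] : (0:ℝ) ≤ 4 - b ^ 2), sq_nonneg (2 - |b|)]
    have h2 : |a| * (4 - b ^ 2) / r ≤ 2 - |b| := by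
      rw [div_le_iff₀ hrpos]
      nlinarith [abs_nonneg b]
    calc |b + s * ((-(2 * a) * (4 - b ^ 2)) / (2 * r))| ≤ |b| + |a| * (4 - b ^ 2) / r := by
          rw [← habs2]; exact htri
      _ ≤ 2 := by linarith
  rw [abs_div]
  rw [abs_of_pos (by norm_num : (0:ℝ) < 2)]
  linarith

/-- Let `f_±(x, y, λ) = (1/2)(xy ± √(4λ² + (4 - x²)(4 - y²)))`. For `λ > 4` and
`x, y ∈ [-2, 2]`, the partial derivatives of `f_±` in `x` and in `y` are bounded by `1`
in absolute value. `s = ±1` selects the branch. -/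
theorem fpm_partial_deriv_bound (lam : ℝ) (hlam : 4 < lam) (s : ℝ) (hs : s = 1 ∨ s = -1)
    (x y : ℝ) (hx : x ∈ Set.Icc (-2 : ℝ) 2) (hy : y ∈ Set.Icc (-2 : ℝ) 2) :
    |deriv (fun t : ℝ =>
        (t * y + s * Real.sqrt (4 * lam ^ 2 + (4 - t ^ 2) * (4 - y ^ 2))) / 2) x| ≤ 1 ∧
    |deriv (fun t : ℝ =>
        (x * t + s * Real.sqrt (4 * lam ^ 2 + (4 - x ^ 2) * (4 - t ^ 2))) / 2) y| ≤ 1 := by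
  constructor
  · exact fpm_aux lam hlam s hs x y hx hy
  · have heq : (fun t : ℝ =>
        (x * t + s * Real.sqrt (4 * lam ^ 2 + (4 - x ^ 2) * (4 - t ^ 2))) / 2) =
        (fun t : ℝ =>
        (t * x + s * Real.sqrt (4 * lam ^ 2 + (4 - t ^ 2) * (4 - x ^ 2))) / 2) := by
      funext t; rw [mul_comm x t, mul_comm (4 - x ^ 2) (4 - t ^ 2)]
    rw [heq]
    exact fpm_aux lam hlam s hs y x hy hx
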